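/- arXiv:2210.10257 — 2 statements merged into one kernel-verified Lean document; each statement's English description precedes it below -/
import Mathlib

section
/- Let a, b, p, q, t ∈ ℚ with a ≠ 0, a = p·q·t, and b = (p² + q²)·t − 2, and suppose g(x) = x⁴ + a·x³ + b·x² + a·x + 1 is irreducible over ℚ. Then: (1) a² − 4b + 8 is not a square in ℚ; (2) p²t is a square in ℚ if and only if q²t is a square in ℚ, and this holds if and only if b + 2 + 2a is a square in ℚ; (3) neither p²t·(q²t − 4) nor q²t·(p²t − 4) is a square in ℚ. -/
open Polynomial

lemma expand_aux16 (u v c d : ℚ) :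
    (X ^ 2 + C u * X + C c) * (X ^ 2 + C v * X + C d)
      = X ^ 4 + C (u + v) * X ^ 3 + C (c + d + u * v) * X ^ 2
          + C (u * d + v * c) * X + C (c * d) := by
  simp only [C_add, C_mul]; ring

lemma not_unit_quad16 (u c : ℚ) : ¬ IsUnit (X ^ 2 + C u * X + C c : ℚ[X]) := by
  intro h
  have h2 : (X ^ 2 + C u * X + C c : ℚ[X]).natDegree = 2 := by compute_degree!
  have h0 := natDegree_eq_zero_of_isUnit h
  omega

lemma aux16 (p q t r : ℚ) (hp : p ≠ 0) (hq : q ≠ 0) (ht : t ≠ 0)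
    (hr : p ^ 2 * t * (q ^ 2 * t - 4) = r ^ 2) :
    ∃ u v c d : ℚ, u + v = p * q * t ∧ c + d + u * v = (p ^ 2 + q ^ 2) * t - 2 ∧
      u * d + v * c = p * q * t ∧ c * d = 1 := by
  have hS : q ^ 2 * t ≠ 0 := mul_ne_zero (pow_ne_zero 2 hq) ht
  obtain ⟨s, hs⟩ : ∃ s : ℚ, s ^ 2 = q ^ 2 * t * (q ^ 2 * t - 4) :=
    ⟨q * r / p, by field_simp; linear_combination -hr⟩
  obtain ⟨c, d, hsum, hprod⟩ : ∃ c d : ℚ, c + d = q ^ 2 * t - 2 ∧ c * d = 1 :=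
    ⟨(q ^ 2 * t - 2 + s) / 2, (q ^ 2 * t - 2 - s) / 2, by ring, by linear_combination -hs / 4⟩
  have hc1 : 1 + c ≠ 0 := by
    intro h
    exact hS (by linear_combination (1 + d) * h - hsum - hprod)
  obtain ⟨v, hv⟩ : ∃ v : ℚ, v * (1 + c) = p * q * t := ⟨_, div_mul_cancel₀ _ hc1⟩
  have hsq : v ^ 2 * c * (q ^ 2 * t) = p ^ 2 * t * (q ^ 2 * t) := by
    linear_combination (v * (1 + c) + p * q * t) * hv - v ^ 2 * c * hsum + v ^ 2 * hprod
  have hv2 : v ^ 2 * c = p ^ 2 * t := mul_right_cancel₀ hS hsq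
  exact ⟨v * c, v, c, d, by linear_combination hv, by linear_combination hv2 + hsum,
    by linear_combination v * hprod + hv, hprod⟩

theorem stmt16 (a b p q t : ℚ) (ha : a ≠ 0) (hapqt : a = p * q * t)
    (hb : b = (p ^ 2 + q ^ 2) * t - 2)
    (hg : Irreducible (X ^ 4 + C a * X ^ 3 + C b * X ^ 2 + C a * X + 1 : ℚ[X])) :
    (¬ ∃ r : ℚ, a ^ 2 - 4 * b + 8 = r ^ 2) ∧
    ((∃ r : ℚ, p ^ 2 * t = r ^ 2) ↔ (∃ r : ℚ, q ^ 2 * t = r ^ 2)) ∧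
    ((∃ r : ℚ, p ^ 2 * t = r ^ 2) ↔ (∃ r : ℚ, b + 2 + 2 * a = r ^ 2)) ∧
    (¬ ∃ r : ℚ, p ^ 2 * t * (q ^ 2 * t - 4) = r ^ 2) ∧
    (¬ ∃ r : ℚ, q ^ 2 * t * (p ^ 2 * t - 4) = r ^ 2) := by
  subst hb
  subst hapqt
  have hp : p ≠ 0 := by intro h; exact ha (by rw [h]; ring)
  have hq : q ≠ 0 := by intro h; exact ha (by rw [h]; ring)
  have ht : t ≠ 0 := by intro h; exact ha (by rw [h]; ring)
  have key : ∀ u v c d : ℚ, u + v = p * q * t →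
      c + d + u * v = (p ^ 2 + q ^ 2) * t - 2 →
      u * d + v * c = p * q * t → c * d = 1 → False := by
    intro u v c d h1 h2 h3 h4
    have hfac : (X ^ 4 + C (p * q * t) * X ^ 3 + C ((p ^ 2 + q ^ 2) * t - 2) * X ^ 2
          + C (p * q * t) * X + 1 : ℚ[X])
        = (X ^ 2 + C u * X + C c) * (X ^ 2 + C v * X + C d) := by
      rw [expand_aux16, h1, h2, h3, h4, map_one]
    rcases hg.isUnit_or_isUnit hfac with h | h
    exacts [not_unit_quad16 u c h, not_unit_quad16 v d h]
  have h1 : ¬ ∃ r : ℚ, (p * q * t) ^ 2 - 4 * ((p ^ 2 + q ^ 2) * t - 2) + 8 = r ^ 2 := by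
    rintro ⟨r, hr⟩
    exact key ((p * q * t + r) / 2) ((p * q * t - r) / 2) 1 1 (by ring)
      (by linear_combination hr / 4) (by ring) (by ring)
  have hpq : p + q ≠ 0 := by
    intro h
    exact h1 ⟨p ^ 2 * t - 4, by linear_combination ((q - p) * t * (p ^ 2 * t - 4)) * h⟩
  have sqt : ∀ x : ℚ, x ≠ 0 → ((∃ r : ℚ, x ^ 2 * t = r ^ 2) ↔ ∃ r : ℚ, t = r ^ 2) := by
    intro x hx
    constructor
    · rintro ⟨r, hr⟩; exact ⟨r / x, by field_simp; linear_combination hr⟩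
    · rintro ⟨r, hr⟩; exact ⟨x * r, by rw [hr]; ring⟩
  refine ⟨h1, ?_, ?_, ?_, ?_⟩
  · rw [sqt p hp, sqt q hq]
  · rw [sqt p hp]
    constructor
    · rintro ⟨r, hr⟩
      exact ⟨(p + q) * r, by linear_combination (p + q) ^ 2 * hr⟩
    · rintro ⟨r, hr⟩
      exact ⟨r / (p + q), by field_simp; linear_combination hr⟩
  · rintro ⟨r, hr⟩
    obtain ⟨u, v, c, d, e1, e2, e3, e4⟩ := aux16 p q t r hp hq ht hr
    exact key u v c d e1 e2 e3 e4
  · rintro ⟨r, hr⟩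
    obtain ⟨u, v, c, d, e1, e2, e3, e4⟩ := aux16 q p t r hq hp ht hr
    exact key u v c d (by linear_combination e1) (by linear_combination e2)
      (by linear_combination e3) e4
end

section
/- Let a, b, p, q, t ∈ ℚ with a ≠ 0, a = p·q·t, and b = (p² + q²)·t − 2, and suppose f(x) = x⁸ + a·x⁶ + b·x⁴ + a·x² + 1 is irreducible over ℚ. Define S₁(x) = x⁴ + 2pqt·x³ + (8 + 2p²t − 4q²t + p²q²t²)·x² + 2pqt·(p²t − 4)·x + (p²t − 4)² and S₂(x) = x⁴ + 2pqt·x³ + (8 + 2q²t − 4p²t + p²q²t²)·x² + 2pqt·(q²t − 4)·x + (q²t − 4)². Then: (1) S₁(x²) is irreducible over ℚ if and only if b + 2 + 2a is not a square in ℚ and q²t − 4 is not a square in ℚ; (2) S₂(x²) is irreducible over ℚ if and only if b + 2 + 2a is not a square in ℚ and p²t − 4 is not a square in ℚ; (3) it is impossible that both p²t − 4 and q²t − 4 are squares in ℚ. -/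
open Polynomial

section Stmt17Aux

-- generic quartic product helper
lemma quartic_mul' (u v k k' c6 c4 c2 c0 : ℚ) (h1 : u+v=c6) (h2 : k+k'+u*v=c4)
    (h3 : u*k'+v*k=c2) (h4 : k*k'=c0) :
    (X^8 + C c6*X^6 + C c4*X^4 + C c2*X^2 + C c0 : ℚ[X])
      = (X^4+C u*X^2+C k)*(X^4+C v*X^2+C k') := by
  have : ((X:ℚ[X])^4 + C u * X^2 + C k) * (X^4 + C v * X^2 + C k')
      = X^8 + C (u+v) * X^6 + C (k+k'+u*v) * X^4 + C (u*k'+v*k) * X^2 + C (k*k') := by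
    simp only [C_add, C_mul]; ring
  rw [this, h1, h2, h3, h4]

lemma quartic_not_unit (u k : ℚ) : ¬ IsUnit ((X:ℚ[X])^4 + C u * X^2 + C k) := by
  intro h
  have hd : ((X:ℚ[X])^4 + C u*X^2 + C k).natDegree = 4 := by compute_degree!
  have := Polynomial.natDegree_eq_zero_of_isUnit h
  omega





lemma rat_sqrt (t : ℚ) (htns : ¬ ∃ n : ℚ, t = n^2) (m : ℂ) (hm : m^2 = (t:ℂ))
    (u v : ℚ) (h : (u:ℂ) + v*m = 0) : u = 0 ∧ v = 0 := by
  by_cases hv : v = 0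
  · subst hv; simp at h; exact ⟨by exact_mod_cast h, rfl⟩
  · exfalso
    apply htns
    refine ⟨u/v, ?_⟩
    have hvC : (v:ℂ) ≠ 0 := by exact_mod_cast hv
    have hmu : m = -(u/v : ℚ) := by
      push_cast
      field_simp
      linear_combination h
    have : (t:ℂ) = ((u/v : ℚ)^2 : ℚ) := by
      rw [← hm, hmu]; push_cast; ring
    exact_mod_cast this

lemma indep (t B : ℚ) (htns : ¬ ∃ n : ℚ, t = n^2) (hBns : ¬ ∃ n : ℚ, B = n^2)
    (htBns : ¬ ∃ n : ℚ, t*B = n^2) (m β : ℂ) (hm : m^2 = (t:ℂ)) (hβ : β^2 = (B:ℂ))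
    (x y z w : ℚ) (h : (x:ℂ) + y*m + z*β + w*(m*β) = 0) :
    x = 0 ∧ y = 0 ∧ z = 0 ∧ w = 0 := by
  by_cases hzw : z = 0 ∧ w = 0
  · obtain ⟨hz, hw⟩ := hzw
    subst hz; subst hw
    have h' : (x:ℂ) + y*m = 0 := by push_cast at h ⊢; linear_combination h
    obtain ⟨hx, hy⟩ := rat_sqrt t htns m hm x y h'
    exact ⟨hx, hy, rfl, rfl⟩
  · exfalso
    have hB0 : B ≠ 0 := fun hB0 => hBns ⟨0, by rw [hB0]; norm_num⟩
    have hD : z^2 - t*w^2 ≠ 0 := by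
      intro hD0
      by_cases hw : w = 0
      · apply hzw
        have hz2 : z^2 = 0 := by rw [hw] at hD0; linarith
        exact ⟨by exact pow_eq_zero_iff two_ne_zero |>.1 hz2, hw⟩
      · exact htns ⟨z/w, by field_simp; linear_combination -hD0⟩
    set c : ℚ := -(x*z - t*y*w)/(z^2 - t*w^2) with hc
    set d : ℚ := -(y*z - x*w)/(z^2 - t*w^2) with hd
    have hDC : ((z^2 - t*w^2 : ℚ):ℂ) ≠ 0 := by exact_mod_cast hD
    have key : ((z^2 - t*w^2 : ℚ):ℂ) * β = ((-(x*z - t*y*w) : ℚ):ℂ) + ((-(y*z - x*w) : ℚ):ℂ)*m := by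
      push_cast
      linear_combination ((z:ℂ) - w*m) * h + ((y:ℂ)*w + w^2*β) * hm
    have hβeq : β = (c:ℂ) + (d:ℂ)*m := by
      rw [hc, hd]
      push_cast
      rw [div_mul_eq_mul_div, ← add_div, eq_div_iff (by push_cast at hDC; exact hDC)]
      push_cast at key
      linear_combination key
    have h2 : ((c^2 + t*d^2 - B : ℚ):ℂ) + ((2*c*d : ℚ):ℂ)*m = 0 := by
      push_cast
      linear_combination (-((c:ℂ)+(d:ℂ)*m+β)) * hβeq + hβ - (d:ℂ)^2*hm
    obtain ⟨hA, hcd⟩ := rat_sqrt t htns m hm _ _ h2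
    have hcd' : c = 0 ∨ d = 0 := by
      rcases mul_eq_zero.1 (by linarith : c*d = 0) with h' | h'
      · exact Or.inl h'
      · exact Or.inr h'
    rcases hcd' with h' | h'
    · have hd0 : d ≠ 0 := by
        intro hd0
        rw [h', hd0] at hA
        exact hBns ⟨0, by linarith⟩
      exact htBns ⟨t*d, by rw [h'] at hA; linear_combination (-t)*hA⟩
    · exact hBns ⟨c, by rw [h'] at hA; linear_combination -hA⟩



lemma span_mul_eq (t B : ℚ) (m β : ℂ) (hm : m^2 = (t:ℂ)) (hβ : β^2 = (B:ℂ))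
    (x1 y1 z1 w1 x2 y2 z2 w2 : ℚ) :
    ((x1:ℂ) + y1*m + z1*β + w1*(m*β)) * ((x2:ℂ) + y2*m + z2*β + w2*(m*β))
      = ((x1*x2 + t*(y1*y2) + B*(z1*z2) + t*(B*(w1*w2)) : ℚ):ℂ)
        + ((x1*y2 + y1*x2 + B*(z1*w2 + w1*z2) : ℚ):ℂ)*m
        + ((x1*z2 + z1*x2 + t*(y1*w2 + w1*y2) : ℚ):ℂ)*β
        + ((x1*w2 + w1*x2 + y1*z2 + z1*y2 : ℚ):ℂ)*(m*β) := by
  push_cast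
  linear_combination ((y1:ℂ)*y2 + ((w1:ℂ)*y2 + (y1:ℂ)*w2)*β + (w1:ℂ)*w2*β^2) * hm
    + ((z1:ℂ)*z2 + (t:ℂ)*(w1*w2) + ((w1:ℂ)*z2 + (z1:ℂ)*w2)*m) * hβ

def InS (m β u : ℂ) : Prop := ∃ x y z w : ℚ, u = (x:ℂ) + y*m + z*β + w*(m*β)

lemma InS_rat (m β : ℂ) (x : ℚ) : InS m β (x:ℂ) := ⟨x,0,0,0, by push_cast; ring⟩

lemma InS_add {m β u v : ℂ} (hu : InS m β u) (hv : InS m β v) : InS m β (u+v) := by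
  obtain ⟨x1,y1,z1,w1,rfl⟩ := hu; obtain ⟨x2,y2,z2,w2,rfl⟩ := hv
  exact ⟨x1+x2, y1+y2, z1+z2, w1+w2, by push_cast; ring⟩

lemma InS_neg {m β u : ℂ} (hu : InS m β u) : InS m β (-u) := by
  obtain ⟨x1,y1,z1,w1,rfl⟩ := hu
  exact ⟨-x1,-y1,-z1,-w1, by push_cast; ring⟩

lemma InS_mul (t B : ℚ) (m β : ℂ) (hm : m^2 = (t:ℂ)) (hβ : β^2 = (B:ℂ))
    {u v : ℂ} (hu : InS m β u) (hv : InS m β v) : InS m β (u*v) := by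
  obtain ⟨x1,y1,z1,w1,rfl⟩ := hu; obtain ⟨x2,y2,z2,w2,rfl⟩ := hv
  exact ⟨_,_,_,_, span_mul_eq t B m β hm hβ x1 y1 z1 w1 x2 y2 z2 w2⟩

lemma InS_inv (t B : ℚ) (htns : ¬ ∃ n : ℚ, t = n^2) (hBns : ¬ ∃ n : ℚ, B = n^2)
    (htBns : ¬ ∃ n : ℚ, t*B = n^2) (m β : ℂ) (hm : m^2 = (t:ℂ)) (hβ : β^2 = (B:ℂ))
    {u : ℂ} (hu : InS m β u) (hne : u ≠ 0) : InS m β u⁻¹ := by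
  obtain ⟨x,y,z,w,rfl⟩ := hu
  set P : ℚ := x^2 + B*z^2 - t*y^2 - t*(B*w^2) with hP
  set Q : ℚ := 2*(x*z - t*y*w) with hQ
  set σu : ℂ := (x:ℂ) + ((-y:ℚ):ℂ)*m + ((z:ℚ):ℂ)*β + ((-w:ℚ):ℂ)*(m*β) with hσ
  have huσ : ((x:ℂ) + y*m + z*β + w*(m*β)) * σu = (P:ℚ) + (Q:ℚ)*β := by
    have := span_mul_eq t B m β hm hβ x y z w x (-y) z (-w)
    rw [hσ]
    rw [show ((x:ℂ) + y*m + z*β + w*(m*β)) * ((x:ℂ) + ((-y:ℚ):ℂ)*m + ((z:ℚ):ℂ)*β + ((-w:ℚ):ℂ)*(m*β)) = ((x:ℂ) + y*m + z*β + w*(m*β)) * ((x:ℂ) + ((-y:ℚ):ℂ)*m + ((z:ℚ):ℂ)*β + ((-w:ℚ):ℂ)*(m*β)) from rfl, this, hP, hQ]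
    push_cast
    ring
  set N : ℚ := P^2 - B*Q^2 with hN
  have hNeq : ((x:ℂ) + y*m + z*β + w*(m*β)) * (σu * ((P:ℚ) - (Q:ℚ)*β)) = (N:ℂ) := by
    rw [← mul_assoc, huσ, hN]
    push_cast
    linear_combination (-(Q:ℂ)^2) * hβ
  have hN0 : N ≠ 0 := by
    intro hN0
    rcases eq_or_ne Q 0 with hQ0 | hQ0
    · have hP0 : P = 0 := by
        have : P^2 = 0 := by rw [hN] at hN0; rw [hQ0] at hN0; linarith
        exact pow_eq_zero_iff two_ne_zero |>.1 this
      have : ((x:ℂ) + y*m + z*β + w*(m*β)) * σu = 0 := by rw [huσ, hP0, hQ0]; push_cast; ring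
      rcases mul_eq_zero.1 this with h0 | h0
      · exact hne h0
      · obtain ⟨hx,hy,hz,hw⟩ := indep t B htns hBns htBns m β hm hβ x (-y) z (-w) (by rw [hσ] at h0; push_cast at h0 ⊢; linear_combination h0)
        apply hne
        rw [hx, neg_eq_zero.1 hy, hz, neg_eq_zero.1 hw]
        push_cast; ring
    · exact hBns ⟨P/Q, by rw [hN] at hN0; field_simp; nlinarith [hN0]⟩
  have hNC : (N:ℂ) ≠ 0 := by exact_mod_cast hN0
  have h1 : ((x:ℂ) + y*m + z*β + w*(m*β)) * (σu * ((P:ℚ) - (Q:ℚ)*β) * ((N:ℂ))⁻¹) = 1 := by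
    rw [← mul_assoc, hNeq]
    exact mul_inv_cancel₀ hNC
  have h2 : ((x:ℂ) + y*m + z*β + w*(m*β))⁻¹ = σu * ((P:ℚ) - (Q:ℚ)*β) * ((N:ℂ))⁻¹ :=
    inv_eq_of_mul_eq_one_right h1
  rw [h2]
  apply InS_mul t B m β hm hβ
  · apply InS_mul t B m β hm hβ
    · exact ⟨x,-y,z,-w, rfl⟩
    · exact ⟨P,0,-Q,0, by push_cast; ring⟩
  · exact ⟨N⁻¹,0,0,0, by push_cast; ring⟩




lemma coords_contra (p q t s ε B x y z w : ℚ) (hB : B = q^2*t-4)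
    (hp : p ≠ 0) (hq : q ≠ 0) (ht : t ≠ 0) (hs : s^2 = 1) (hε : ε^2 = 1)
    (hABns : ¬ ∃ n : ℚ, (p^2*t-4)*B = n^2) (htns : ¬ ∃ n : ℚ, t = n^2)
    (h1 : x^2 + t*y^2 + B*z^2 + t*(B*w^2) = -(p*q*t)/2)
    (h2 : 2*(x*y + B*(z*w)) = ε*q)
    (h3 : 2*(x*z + t*(y*w)) = -s)
    (h4 : 2*(x*w + y*z) = s*ε*p/2) : False := by
  set P : ℚ := x^2 + B*z^2 - t*y^2 - t*(B*w^2) with hP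
  set Q : ℚ := 2*(x*z - t*(y*w)) with hQ
  have hPQ : P*Q = 0 := by
    have hid : P*Q = (x^2 + t*y^2 + B*z^2 + t*(B*w^2))*(2*(x*z + t*(y*w)))
        - t*(2*(x*y + B*(z*w)))*(2*(x*w + y*z)) := by rw [hP, hQ]; ring
    rw [hid, h1, h2, h3, h4]
    linear_combination (-(p*q*t*s)/2) * hε
  have hPB : P^2 + B*Q^2 = p^2*t - 4 := by
    have hid : P^2 + B*Q^2 = (x^2 + t*y^2 + B*z^2 + t*(B*w^2))^2 - t*(2*(x*y + B*(z*w)))^2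
        + B*(2*(x*z + t*(y*w)))^2 - t*(B*(2*(x*w + y*z))^2) := by rw [hP, hQ]; ring
    rw [hid, h1, h2, h3, h4, hB]
    linear_combination (-t*q^2 - t*p^2*(q^2*t-4)/4) * hε + ((q^2*t-4) - t*p^2*(q^2*t-4)*ε^2/4) * hs
  rcases mul_eq_zero.1 hPQ with hP0 | hQ0
  · apply hABns
    refine ⟨B*Q, ?_⟩
    rw [← hPB, hP0]
    ring
  · have hQ0' : 2*(x*z - t*(y*w)) = 0 := by rw [← hQ]; exact hQ0
    have hxz : x*z = -s/4 := by linarith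
    have hyw : t*(y*w) = -s/4 := by linarith
    have hzw16 : (x*z)*(t*(y*w)) = 1/16 := by
      rw [hxz, hyw]; linear_combination (1/16)*hs
    have h16 : 16*t*(x*y)^2 + B = 8*ε*q*t*(x*y) := by
      linear_combination (8*t*(x*y))*h2 - 16*B*hzw16
    exact htns ⟨(4*t*(x*y) - ε*q*t)/2,
      by linear_combination (-t/4)*h16 + (-(q^2*t^2)/4)*hε + (t/4)*hB⟩


section
variable (p q t : ℚ)

theorem core (p q t s ε : ℚ) (hp : p ≠ 0) (hq : q ≠ 0) (ht : t ≠ 0)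
    (hs : s^2 = 1) (hε : ε^2 = 1)
    (htns : ¬ ∃ n : ℚ, t = n^2) (hBns : ¬ ∃ n : ℚ, q^2*t-4 = n^2)
    (htBns : ¬ ∃ n : ℚ, t*(q^2*t-4) = n^2)
    (hABns : ¬ ∃ n : ℚ, (p^2*t-4)*(q^2*t-4) = n^2)
    (m β : ℂ) (hm : m^2 = (t:ℂ)) (hβ : β^2 = ((q^2*t-4 : ℚ):ℂ))
    (z : ℂ) (c0 c1 c2 c3 c4 : ℚ)
    (hγ : z^2 = ((-(p*q*t)/2 : ℚ):ℂ) + ((ε*q : ℚ):ℂ)*m + ((-s : ℚ):ℂ)*β + ((s*ε*p/2 : ℚ):ℂ)*(m*β))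
    (hG : (c0:ℂ) + c1*z + c2*z^2 + c3*z^3 + c4*z^4 = 0)
    (hne : ¬(c1 = 0 ∧ c2 = 0 ∧ c3 = 0 ∧ c4 = 0)) : False := by
  set B : ℚ := q^2*t-4 with hBdef
  have hs0 : s ≠ 0 := by intro h; rw [h] at hs; norm_num at hs
  have hε0 : ε ≠ 0 := by intro h; rw [h] at hε; norm_num at hε
  set g1 : ℚ := -(p*q*t)/2 with hg1
  set g2 : ℚ := ε*q with hg2
  set g3 : ℚ := -s with hg3
  set g4 : ℚ := s*ε*p/2 with hg4
  set γ : ℂ := ((g1:ℚ):ℂ) + ((g2:ℚ):ℂ)*m + ((g3:ℚ):ℂ)*β + ((g4:ℚ):ℂ)*(m*β) with hγdef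
  have hγ' : z^2 = γ := hγ
  have hγγ : γ*γ = ((g1*g1 + t*(g2*g2) + B*(g3*g3) + t*(B*(g4*g4)) : ℚ):ℂ)
        + ((g1*g2 + g2*g1 + B*(g3*g4 + g4*g3) : ℚ):ℂ)*m
        + ((g1*g3 + g3*g1 + t*(g2*g4 + g4*g2) : ℚ):ℂ)*β
        + ((g1*g4 + g4*g1 + g2*g3 + g3*g2 : ℚ):ℂ)*(m*β) :=
    span_mul_eq t B m β hm hβ g1 g2 g3 g4 g1 g2 g3 g4
  by_cases hO : (c1:ℂ) + (c3:ℂ)*γ = 0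
  · -- degenerate: even-polynomial relation
    have hOc : ((c1 + c3*g1 : ℚ):ℂ) + ((c3*g2 : ℚ):ℂ)*m + ((c3*g3 : ℚ):ℂ)*β + ((c3*g4 : ℚ):ℂ)*(m*β) = 0 := by
      push_cast
      linear_combination hO
    obtain ⟨e1, e2, e3, e4⟩ := indep t B htns hBns htBns m β hm hβ _ _ _ _ hOc
    have hc3 : c3 = 0 := by
      rcases mul_eq_zero.1 e3 with h | h
      · exact h
      · exact absurd (by rw [hg3] at *; linarith [e3] : s = 0) hs0
    have hc1 : c1 = 0 := by rw [hc3] at e1; linarith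
    have hz4 : z^4 = γ*γ := by rw [show (z:ℂ)^4 = (z^2)^2 by ring, hγ']; ring
    have hEq : ((c0 + c2*g1 + c4*(g1*g1 + t*(g2*g2) + B*(g3*g3) + t*(B*(g4*g4))) : ℚ):ℂ)
        + ((c2*g2 + c4*(g1*g2 + g2*g1 + B*(g3*g4 + g4*g3)) : ℚ):ℂ)*m
        + ((c2*g3 + c4*(g1*g3 + g3*g1 + t*(g2*g4 + g4*g2)) : ℚ):ℂ)*β
        + ((c2*g4 + c4*(g1*g4 + g4*g1 + g2*g3 + g3*g2) : ℚ):ℂ)*(m*β) = 0 := by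
      rw [hc3, hc1] at hG
      push_cast
      push_cast at hG hγγ
      linear_combination hG - (c2:ℂ)*hγ' - (c4:ℂ)*hz4 - (c2:ℂ)*hγdef - (c4:ℂ)*hγγ
    obtain ⟨f1, f2, f3, f4⟩ := indep t B htns hBns htBns m β hm hβ _ _ _ _ hEq
    -- from f3 : c2 = 2 p q t c4 ; from f2 : c4 = 0
    have hc2 : c2 = 2*(p*q*t)*c4 := by
      have : s*(c2*g3 + c4*(g1*g3 + g3*g1 + t*(g2*g4 + g4*g2))) = 0 := by rw [f3]; ring
      rw [hg1, hg2, hg3, hg4] at this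
      linear_combination -this + (c2 - p*q*t*c4 - p*q*t*c4*ε^2)*hs + (p*q*t*c4*s^2)*hε + (-(2*c2 - 3*p*q*t*c4 - p*q*t*c4*ε^2))*hs
    have hc4 : c4 = 0 := by
      have : ε*(c2*g2 + c4*(g1*g2 + g2*g1 + B*(g3*g4 + g4*g3))) = 0 := by rw [f2]; ring
      rw [hg1, hg2, hg3, hg4, hBdef, hc2] at this
      -- this : ε^2 * (stuff) = 0  where stuff = q*2pqt*c4 - (p q^2 t + (q^2 t -4) p) c4 = 4 p c4 (using s^2=1)
      have h4p : (4*p)*c4 = 0 := by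
        linear_combination this + (4*p*c4 - 2*p*q^2*t*c4 + (q^2*t-4)*p*c4*s^2 + p*q^2*t*c4*s^2)*hε + ((q^2*t-4)*p*c4*ε^2 + p*q^2*t*c4*ε^2)*hs + (-(p*c4*((4-2*q^2*t) + ε^2*(3*q^2*t-4))))*hs + (-4*p*c4)*hε
      rcases mul_eq_zero.1 h4p with h | h
      · exact absurd (by linarith : p = 0) hp
      · exact h
    exact hne ⟨hc1, by rw [hc2, hc4]; ring, hc3, hc4⟩
  · -- main branch
    have hz3 : z^3 = z*γ := by rw [show (z:ℂ)^3 = z*z^2 by ring, hγ']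
    have hz4 : z^4 = γ*γ := by rw [show (z:ℂ)^4 = (z^2)^2 by ring, hγ']; ring
    have hzO : z * ((c1:ℂ) + (c3:ℂ)*γ) = -(((c0:ℂ) + (c2:ℂ)*γ + (c4:ℂ)*(γ*γ))) := by
      linear_combination hG + (-((c3:ℂ)*z + (c2:ℂ) + (c4:ℂ)*(z^2+γ))) * hγ'
    have hInSz : InS m β z := by
      have hEIn : InS m β ((c0:ℂ) + (c2:ℂ)*γ + (c4:ℂ)*(γ*γ)) := by
        apply InS_add
        apply InS_add
        · exact InS_rat m β c0
        · exact InS_mul t B m β hm hβ (InS_rat m β c2) ⟨g1,g2,g3,g4,rfl⟩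
        · exact InS_mul t B m β hm hβ (InS_rat m β c4)
            (InS_mul t B m β hm hβ ⟨g1,g2,g3,g4,rfl⟩ ⟨g1,g2,g3,g4,rfl⟩)
      have hOIn : InS m β ((c1:ℂ) + (c3:ℂ)*γ) := by
        apply InS_add
        · exact InS_rat m β c1
        · exact InS_mul t B m β hm hβ (InS_rat m β c3) ⟨g1,g2,g3,g4,rfl⟩
      have hz : z = -(((c0:ℂ) + (c2:ℂ)*γ + (c4:ℂ)*(γ*γ))) * ((c1:ℂ) + (c3:ℂ)*γ)⁻¹ := by
        rw [eq_mul_inv_iff_mul_eq₀ hO]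
        linear_combination hzO
      rw [hz]
      exact InS_mul t B m β hm hβ (InS_neg hEIn) (InS_inv t B htns hBns htBns m β hm hβ hOIn hO)
    obtain ⟨x, y, zc, w, hz⟩ := hInSz
    have hzz : z^2 = ((x*x + t*(y*y) + B*(zc*zc) + t*(B*(w*w)) : ℚ):ℂ)
        + ((x*y + y*x + B*(zc*w + w*zc) : ℚ):ℂ)*m
        + ((x*zc + zc*x + t*(y*w + w*y) : ℚ):ℂ)*β
        + ((x*w + w*x + y*zc + zc*y : ℚ):ℂ)*(m*β) := by
      rw [show (z:ℂ)^2 = z*z by ring, hz]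
      exact span_mul_eq t B m β hm hβ x y zc w x y zc w
    have hdiff : ((x*x + t*(y*y) + B*(zc*zc) + t*(B*(w*w)) - g1 : ℚ):ℂ)
        + ((x*y + y*x + B*(zc*w + w*zc) - g2 : ℚ):ℂ)*m
        + ((x*zc + zc*x + t*(y*w + w*y) - g3 : ℚ):ℂ)*β
        + ((x*w + w*x + y*zc + zc*y - g4 : ℚ):ℂ)*(m*β) = 0 := by
      push_cast
      push_cast at hzz
      linear_combination hγ' + hγdef - hzz
    obtain ⟨k1, k2, k3, k4⟩ := indep t B htns hBns htBns m β hm hβ _ _ _ _ hdiff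
    refine coords_contra p q t s ε B x y zc w hBdef hp hq ht hs hε hABns htns ?_ ?_ ?_ ?_
    · rw [hg1] at k1; linear_combination k1
    · rw [hg2] at k2; linear_combination k2
    · rw [hg3] at k3; linear_combination k3
    · rw [hg4] at k4; linear_combination k4
end




theorem aux (p q t : ℚ) (hp : p ≠ 0) (hq : q ≠ 0) (ht : t ≠ 0)
    (htns : ¬ ∃ n : ℚ, t = n^2) (hBns : ¬ ∃ n : ℚ, q^2*t-4 = n^2)
    (htBns : ¬ ∃ n : ℚ, t*(q^2*t-4) = n^2)
    (hABns : ¬ ∃ n : ℚ, (p^2*t-4)*(q^2*t-4) = n^2)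
    (m β : ℂ) (hm : m^2 = (t:ℂ)) (hβ : β^2 = ((q^2*t-4 : ℚ):ℂ))
    (G : ℚ[X])
    (hdvd : G ∣ (X^8 + C (2*p*q*t) * X^6 + C (8+2*p^2*t-4*q^2*t+p^2*q^2*t^2) * X^4
      + C (2*p*q*t*(p^2*t-4)) * X^2 + C ((p^2*t-4)^2) : ℚ[X]))
    (hd1 : 1 ≤ G.natDegree) (hd4 : G.natDegree ≤ 4) : False := by
  have hG0 : G ≠ 0 := by
    intro h; rw [h] at hd1; simp at hd1
  -- get a complex root of G
  have hdeg : 0 < (G.map (algebraMap ℚ ℂ)).degree := by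
    rw [Polynomial.degree_map_eq_of_injective (algebraMap ℚ ℂ).injective]
    exact Polynomial.natDegree_pos_iff_degree_pos.mp (by omega)
  obtain ⟨z, hz⟩ := Complex.exists_root hdeg
  have hGz : Polynomial.aeval z G = 0 := by
    rwa [Polynomial.aeval_def, ← Polynomial.eval_map]
  obtain ⟨K, hK⟩ := hdvd
  have hΦz0 : Polynomial.aeval z (X^8 + C (2*p*q*t) * X^6 + C (8+2*p^2*t-4*q^2*t+p^2*q^2*t^2) * X^4
      + C (2*p*q*t*(p^2*t-4)) * X^2 + C ((p^2*t-4)^2) : ℚ[X]) = 0 := by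
    rw [hK, map_mul, hGz, zero_mul]
  have hΦz : z^8 + 2*(p:ℂ)*(q:ℂ)*(t:ℂ)*z^6 + (8+2*(p:ℂ)^2*(t:ℂ)-4*(q:ℂ)^2*(t:ℂ)+(p:ℂ)^2*(q:ℂ)^2*(t:ℂ)^2)*z^4
      + 2*(p:ℂ)*(q:ℂ)*(t:ℂ)*((p:ℂ)^2*(t:ℂ)-4)*z^2 + ((p:ℂ)^2*(t:ℂ)-4)^2 = 0 := by
    simp only [map_add, map_mul, map_pow, map_one, aeval_X, aeval_C, eq_ratCast] at hΦz0
    push_cast at hΦz0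
    linear_combination hΦz0
  have hβ' : β^2 = (q:ℂ)^2*(t:ℂ)-4 := by push_cast at hβ; exact hβ
  -- the four roots of the quartic resolvent
  have hprod : (z^2 - (((-(p*q*t)/2 : ℚ):ℂ) + (((1:ℚ)*q : ℚ):ℂ)*m + ((-(1:ℚ) : ℚ):ℂ)*β + (((1:ℚ)*(1:ℚ)*p/2 : ℚ):ℂ)*(m*β)))
      * (z^2 - (((-(p*q*t)/2 : ℚ):ℂ) + (((-1:ℚ)*q : ℚ):ℂ)*m + ((-(1:ℚ) : ℚ):ℂ)*β + (((1:ℚ)*(-1:ℚ)*p/2 : ℚ):ℂ)*(m*β)))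
      * (z^2 - (((-(p*q*t)/2 : ℚ):ℂ) + (((1:ℚ)*q : ℚ):ℂ)*m + ((-(-1:ℚ) : ℚ):ℂ)*β + (((-1:ℚ)*(1:ℚ)*p/2 : ℚ):ℂ)*(m*β)))
      * (z^2 - (((-(p*q*t)/2 : ℚ):ℂ) + (((-1:ℚ)*q : ℚ):ℂ)*m + ((-(-1:ℚ) : ℚ):ℂ)*β + (((-1:ℚ)*(-1:ℚ)*p/2 : ℚ):ℂ)*(m*β))) = 0 := by
    push_cast
    linear_combination hΦz
      + ((q:ℂ)^4*t - (1/2)*(p:ℂ)^2*(q:ℂ)^4*(t:ℂ)^2 - 2*β^2*(q:ℂ)^2 + (3/2)*β^2*(p:ℂ)^2*(q:ℂ)^2*t - (1/8)*β^2*(p:ℂ)^4*(q:ℂ)^2*(t:ℂ)^2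
         - (1/2)*β^4*(p:ℂ)^2 + (1/16)*β^4*(p:ℂ)^4*t + m^2*(q:ℂ)^4 - (1/2)*m^2*β^2*(p:ℂ)^2*(q:ℂ)^2 + (1/16)*m^2*β^4*(p:ℂ)^4
         - 2*z^2*(p:ℂ)*(q:ℂ)^3*t + 4*z^2*β^2*(p:ℂ)*(q:ℂ) - (1/2)*z^2*β^2*(p:ℂ)^3*(q:ℂ)*t - 2*z^4*(q:ℂ)^2 - (1/2)*z^4*β^2*(p:ℂ)^2) * hm
      + ((-4:ℂ) - (q:ℂ)^2*t + 2*(p:ℂ)^2*t + (1/2)*(p:ℂ)^2*(q:ℂ)^2*(t:ℂ)^2 - (1/4)*(p:ℂ)^4*(t:ℂ)^2 - (1/16)*(p:ℂ)^4*(q:ℂ)^2*(t:ℂ)^3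
         + β^2 - (1/2)*β^2*(p:ℂ)^2*t + (1/16)*β^2*(p:ℂ)^4*(t:ℂ)^2 + 2*z^2*(p:ℂ)*(q:ℂ)*t - (1/2)*z^2*(p:ℂ)^3*(q:ℂ)*(t:ℂ)^2
         - 2*z^4 - (1/2)*z^4*(p:ℂ)^2*t) * hβ'
  -- coefficient facts
  have h5 : G.natDegree < 5 := by omega
  have hsum := Polynomial.aeval_eq_sum_range' h5 z
  rw [hGz] at hsum
  simp only [Finset.sum_range_succ, Finset.sum_range_zero, zero_add, pow_zero, pow_one,
    Rat.smul_def] at hsum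
  have hGz5 : (G.coeff 0 : ℂ) + (G.coeff 1 : ℂ)*z + (G.coeff 2 : ℂ)*z^2 + (G.coeff 3 : ℂ)*z^3 + (G.coeff 4 : ℂ)*z^4 = 0 := by
    linear_combination -hsum
  have hne : ¬(G.coeff 1 = 0 ∧ G.coeff 2 = 0 ∧ G.coeff 3 = 0 ∧ G.coeff 4 = 0) := by
    rintro ⟨n1, n2, n3, n4⟩
    have hlc := Polynomial.leadingCoeff_ne_zero.mpr hG0
    rw [Polynomial.leadingCoeff] at hlc
    rcases (show G.natDegree = 1 ∨ G.natDegree = 2 ∨ G.natDegree = 3 ∨ G.natDegree = 4 by omega) with h|h|h|h <;>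
      rw [h] at hlc
    · exact hlc n1
    · exact hlc n2
    · exact hlc n3
    · exact hlc n4
  rcases mul_eq_zero.1 hprod with h3 | hf4
  rcases mul_eq_zero.1 h3 with h2 | hf3
  rcases mul_eq_zero.1 h2 with hf1 | hf2
  · exact core p q t 1 1 hp hq ht (by norm_num) (by norm_num) htns hBns htBns hABns m β hm hβ z
      _ _ _ _ _ (by push_cast at hf1 ⊢; linear_combination hf1) hGz5 hne
  · exact core p q t 1 (-1) hp hq ht (by norm_num) (by norm_num) htns hBns htBns hABns m β hm hβ z
      _ _ _ _ _ (by push_cast at hf2 ⊢; linear_combination hf2) hGz5 hne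
  · exact core p q t (-1) 1 hp hq ht (by norm_num) (by norm_num) htns hBns htBns hABns m β hm hβ z
      _ _ _ _ _ (by push_cast at hf3 ⊢; linear_combination hf3) hGz5 hne
  · exact core p q t (-1) (-1) hp hq ht (by norm_num) (by norm_num) htns hBns htBns hABns m β hm hβ z
      _ _ _ _ _ (by push_cast at hf4 ⊢; linear_combination hf4) hGz5 hne




theorem octic_not_unit (c6 c4 c2 c0 : ℚ) :
    ¬ IsUnit ((X:ℚ[X])^8 + C c6 * X^6 + C c4 * X^4 + C c2 * X^2 + C c0) := by
  intro h
  have hd : ((X:ℚ[X])^8 + C c6 * X^6 + C c4 * X^4 + C c2 * X^2 + C c0).natDegree = 8 := by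
    compute_degree!
  have := Polynomial.natDegree_eq_zero_of_isUnit h
  omega

theorem one_le_natDegree_of_not_isUnit (G : ℚ[X]) (h0 : G ≠ 0) (hu : ¬ IsUnit G) :
    1 ≤ G.natDegree := by
  by_contra h
  push_neg at h
  have h00 : G.natDegree = 0 := by omega
  have := Polynomial.eq_C_of_natDegree_eq_zero h00
  apply hu
  rw [this]
  apply Polynomial.isUnit_C.mpr
  apply IsUnit.mk0
  intro hc
  apply h0
  rw [this, hc, map_zero]

theorem hard (p q t : ℚ) (hp : p ≠ 0) (hq : q ≠ 0) (ht : t ≠ 0)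
    (htns : ¬ ∃ n : ℚ, t = n^2) (hBns : ¬ ∃ n : ℚ, q^2*t-4 = n^2)
    (htBns : ¬ ∃ n : ℚ, t*(q^2*t-4) = n^2)
    (hABns : ¬ ∃ n : ℚ, (p^2*t-4)*(q^2*t-4) = n^2) :
    Irreducible (X^8 + C (2*p*q*t) * X^6 + C (8+2*p^2*t-4*q^2*t+p^2*q^2*t^2) * X^4
      + C (2*p*q*t*(p^2*t-4)) * X^2 + C ((p^2*t-4)^2) : ℚ[X]) := by
  have hd8 : (X^8 + C (2*p*q*t) * X^6 + C (8+2*p^2*t-4*q^2*t+p^2*q^2*t^2) * X^4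
      + C (2*p*q*t*(p^2*t-4)) * X^2 + C ((p^2*t-4)^2) : ℚ[X]).natDegree = 8 := by
    compute_degree!
  constructor
  · intro hu
    have := Polynomial.natDegree_eq_zero_of_isUnit hu
    omega
  · intro G H hGH
    by_contra hcon
    push_neg at hcon
    obtain ⟨hGu, hHu⟩ := hcon
    obtain ⟨m, hm⟩ := IsAlgClosed.exists_pow_nat_eq (t:ℂ) (n := 2) (by norm_num)
    obtain ⟨β, hβ⟩ := IsAlgClosed.exists_pow_nat_eq (((q^2*t-4 : ℚ)):ℂ) (n := 2) (by norm_num)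
    have hΦ0 : (X^8 + C (2*p*q*t) * X^6 + C (8+2*p^2*t-4*q^2*t+p^2*q^2*t^2) * X^4
      + C (2*p*q*t*(p^2*t-4)) * X^2 + C ((p^2*t-4)^2) : ℚ[X]) ≠ 0 := by
      intro h
      rw [h] at hd8
      simp at hd8
    have hG0 : G ≠ 0 := by rintro rfl; rw [zero_mul] at hGH; exact hΦ0 hGH
    have hH0 : H ≠ 0 := by rintro rfl; rw [mul_zero] at hGH; exact hΦ0 hGH
    have hdeg : G.natDegree + H.natDegree = 8 := by
      rw [← Polynomial.natDegree_mul hG0 hH0, ← hGH, hd8]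
    have hG1 := one_le_natDegree_of_not_isUnit G hG0 hGu
    have hH1 := one_le_natDegree_of_not_isUnit H hH0 hHu
    rcases le_or_gt G.natDegree 4 with h4 | h4
    · exact aux p q t hp hq ht htns hBns htBns hABns m β hm hβ G ⟨H, hGH⟩ hG1 h4
    · exact aux p q t hp hq ht htns hBns htBns hABns m β hm hβ H ⟨G, by rw [hGH]; ring⟩ hH1 (by omega)

theorem red_of_Bsq (p q t r : ℚ) (hB : q^2*t-4 = r^2) :
    ¬ Irreducible (X^8 + C (2*p*q*t) * X^6 + C (8+2*p^2*t-4*q^2*t+p^2*q^2*t^2) * X^4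
      + C (2*p*q*t*(p^2*t-4)) * X^2 + C ((p^2*t-4)^2) : ℚ[X]) := by
  intro hirr
  have heq := quartic_mul' (p*q*t+2*r) (p*q*t-2*r) (p^2*t-4) (p^2*t-4)
    (2*p*q*t) (8+2*p^2*t-4*q^2*t+p^2*q^2*t^2) (2*p*q*t*(p^2*t-4)) ((p^2*t-4)^2)
    (by ring) (by linear_combination (4 : ℚ)*hB) (by ring) (by ring)
  rcases hirr.2 heq with h | h
  · exact quartic_not_unit _ _ h
  · exact quartic_not_unit _ _ h

theorem red_of_tsq (p q t e : ℚ) (hmm : t = e^2) :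
    ¬ Irreducible (X^8 + C (2*p*q*t) * X^6 + C (8+2*p^2*t-4*q^2*t+p^2*q^2*t^2) * X^4
      + C (2*p*q*t*(p^2*t-4)) * X^2 + C ((p^2*t-4)^2) : ℚ[X]) := by
  subst hmm
  intro hirr
  have heq := quartic_mul' (p*q*e^2-2*e*q) (p*q*e^2+2*e*q)
    (((p*q*e^2-2*e*q)^2-(q^2*e^2-4)*(e*p-2)^2)/4) (((p*q*e^2+2*e*q)^2-(q^2*e^2-4)*(e*p+2)^2)/4)
    (2*p*q*e^2) (8+2*p^2*e^2-4*q^2*e^2+p^2*q^2*(e^2)^2) (2*p*q*e^2*(p^2*e^2-4)) ((p^2*e^2-4)^2)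
    (by ring) (by ring) (by ring) (by ring)
  rcases hirr.2 heq with h | h
  · exact quartic_not_unit _ _ h
  · exact quartic_not_unit _ _ h

theorem notsq_AB (p q t : ℚ)
    (hf : Irreducible (X^8 + C (p*q*t) * X^6 + C ((p^2+q^2)*t-2) * X^4 + C (p*q*t) * X^2 + 1 : ℚ[X])) :
    ¬ ∃ n : ℚ, (p^2*t-4)*(q^2*t-4) = n^2 := by
  rintro ⟨n, hn⟩
  have heq := quartic_mul' ((p*q*t+n)/2) ((p*q*t-n)/2) 1 1
    (p*q*t) ((p^2+q^2)*t-2) (p*q*t) 1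
    (by ring) (by linear_combination (1/4 : ℚ)*hn) (by ring) (by ring)
  rw [map_one] at heq
  rcases hf.2 heq with h | h
  · exact quartic_not_unit _ _ h
  · exact quartic_not_unit _ _ h

theorem notsq_tB (p q t : ℚ)
    (hf : Irreducible (X^8 + C (p*q*t) * X^6 + C ((p^2+q^2)*t-2) * X^4 + C (p*q*t) * X^2 + 1 : ℚ[X])) :
    ¬ ∃ n : ℚ, t*(q^2*t-4) = n^2 := by
  rintro ⟨n, hn⟩
  have heq := quartic_mul' (p*(q*t+n)/2) (p*(q*t-n)/2) ((q^2*t-2+q*n)/2) ((q^2*t-2-q*n)/2)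
    (p*q*t) ((p^2+q^2)*t-2) (p*q*t) 1
    (by ring) (by linear_combination ((p^2)/4 : ℚ)*hn) (by linear_combination (p*q/2 : ℚ)*hn)
    (by linear_combination ((q^2)/4 : ℚ)*hn)
  rw [map_one] at heq
  rcases hf.2 heq with h | h
  · exact quartic_not_unit _ _ h
  · exact quartic_not_unit _ _ h
end Stmt17Aux

theorem stmt17 (a b p q t : ℚ) (ha : a ≠ 0) (hapqt : a = p * q * t)
    (hb : b = (p ^ 2 + q ^ 2) * t - 2)
    (hf : Irreducible (X ^ 8 + C a * X ^ 6 + C b * X ^ 4 + C a * X ^ 2 + 1 : ℚ[X])) :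
    (Irreducible (X ^ 8 + C (2 * p * q * t) * X ^ 6 +
        C (8 + 2 * p ^ 2 * t - 4 * q ^ 2 * t + p ^ 2 * q ^ 2 * t ^ 2) * X ^ 4 +
        C (2 * p * q * t * (p ^ 2 * t - 4)) * X ^ 2 + C ((p ^ 2 * t - 4) ^ 2) : ℚ[X]) ↔
      (¬ ∃ r : ℚ, b + 2 + 2 * a = r ^ 2) ∧ ¬ ∃ r : ℚ, q ^ 2 * t - 4 = r ^ 2) ∧
    (Irreducible (X ^ 8 + C (2 * p * q * t) * X ^ 6 +
        C (8 + 2 * q ^ 2 * t - 4 * p ^ 2 * t + p ^ 2 * q ^ 2 * t ^ 2) * X ^ 4 +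
        C (2 * p * q * t * (q ^ 2 * t - 4)) * X ^ 2 + C ((q ^ 2 * t - 4) ^ 2) : ℚ[X]) ↔
      (¬ ∃ r : ℚ, b + 2 + 2 * a = r ^ 2) ∧ ¬ ∃ r : ℚ, p ^ 2 * t - 4 = r ^ 2) ∧
    ¬ ((∃ r : ℚ, p ^ 2 * t - 4 = r ^ 2) ∧ (∃ r : ℚ, q ^ 2 * t - 4 = r ^ 2)) := by

  subst hapqt
  subst hb
  have hp : p ≠ 0 := by rintro rfl; exact ha (by ring)
  have hq : q ≠ 0 := by rintro rfl; exact ha (by ring)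
  have ht : t ≠ 0 := by rintro rfl; exact ha (by ring)
  have hf' : Irreducible (X^8 + C (p*q*t) * X^6 + C ((p^2+q^2)*t-2) * X^4 + C (p*q*t) * X^2 + 1 : ℚ[X]) := by
    convert hf using 4 <;> norm_num <;> ring_nf
  have hfswap : Irreducible (X^8 + C (q*p*t) * X^6 + C ((q^2+p^2)*t-2) * X^4 + C (q*p*t) * X^2 + 1 : ℚ[X]) := by
    rw [show (q*p*t : ℚ) = p*q*t by ring, show ((q^2+p^2)*t-2 : ℚ) = (p^2+q^2)*t-2 by ring]
    exact hf'
  have hAB := notsq_AB p q t hf'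
  have hAB' : ¬ ∃ n : ℚ, (q^2*t-4)*(p^2*t-4) = n^2 := by
    rintro ⟨n, hn⟩; exact hAB ⟨n, by linear_combination hn⟩
  have htB := notsq_tB p q t hf'
  have htA := notsq_tB q p t hfswap
  have hpq : p + q ≠ 0 := by
    intro h
    have hpe : p = -q := by linarith
    exact hAB ⟨q^2*t-4, by rw [hpe]; ring⟩
  refine ⟨?_, ?_, ?_⟩
  · -- part 1
    constructor
    · intro hirr
      constructor
      · rintro ⟨r, hr⟩
        refine red_of_tsq p q t (r/(p+q)) ?_ ?_
        · field_simp
          linear_combination hr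
        · exact hirr
      · rintro ⟨r, hr⟩
        exact red_of_Bsq p q t r hr hirr
    · rintro ⟨h1, h2⟩
      refine hard p q t hp hq ht ?_ h2 htB hAB
      rintro ⟨n, hn⟩
      exact h1 ⟨(p+q)*n, by rw [hn]; ring⟩
  · -- part 2 (p and q swapped)
    rw [show (2*p*q*t : ℚ) = 2*q*p*t by ring,
        show (8 + 2*q^2*t - 4*p^2*t + p^2*q^2*t^2 : ℚ) = 8 + 2*q^2*t - 4*p^2*t + q^2*p^2*t^2 by ring]
    constructor
    · intro hirr
      constructor
      · rintro ⟨r, hr⟩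
        refine red_of_tsq q p t (r/(p+q)) ?_ ?_
        · field_simp
          linear_combination hr
        · exact hirr
      · rintro ⟨r, hr⟩
        exact red_of_Bsq q p t r hr hirr
    · rintro ⟨h1, h2⟩
      refine hard q p t hq hp ht ?_ h2 htA hAB'
      rintro ⟨n, hn⟩
      exact h1 ⟨(p+q)*n, by rw [hn]; ring⟩
  · -- part 3
    rintro ⟨⟨r, hr⟩, ⟨n, hn⟩⟩
    exact hAB ⟨r*n, by rw [hr, hn]; ring⟩
end
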